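/- arXiv:2203.01237 — 8 statements merged into one kernel-verified Lean document; each statement's English description precedes it below -/
import Mathlib

section
/- Let M=(W,R,v₁,v₂) be a KG² model on a crisp frame. Define a new pair of valuations v*₁, v*₂ on the same frame by v*₁(p,w) = 1 − v₂(p,w) and v*₂(p,w) = 1 − v₁(p,w) for every propositional variable p and world w. Then for every formula φ of biL¬_{□,◇} and every world w ∈ W: v*₁(φ,w) = 1 − v₂(φ,w) and v*₂(φ,w) = 1 − v₁(φ,w). -/
/- Truth values: the real unit interval [0,1] with its complete lattice structure
   (so `sInf ∅ = 1` and `sSup ∅ = 0`). -/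
instance : Fact ((0:ℝ) ≤ 1) := ⟨zero_le_one⟩

abbrev TV : Type := unitInterval

/-- Gödel implication: `a →G b = 1` if `a ≤ b`, else `b`. -/
noncomputable def gimp (a b : TV) : TV := if a ≤ b then 1 else b

/-- Gödel coimplication: `a ⧀G b = 0` if `a ≤ b`, else `a`. -/
noncomputable def gcoimp (a b : TV) : TV := if a ≤ b then 0 else a

/-- Formulas of `biL¬_{□,◇}` over the countable variable set `ℕ`. -/
inductive Formula : Type
  | var : ℕ → Formula
  | neg : Formula → Formula
  | and : Formula → Formula → Formula
  | or : Formula → Formula → Formula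
  | imp : Formula → Formula → Formula
  | coimp : Formula → Formula → Formula
  | box : Formula → Formula
  | dia : Formula → Formula

/-- KG² valuation pair `(v₁, v₂)` on a crisp frame `(W, R)`:
`(kval R v φ w).1 = v₁(φ,w)` and `(kval R v φ w).2 = v₂(φ,w)`. -/
noncomputable def kval {W : Type} (R : W → W → Prop) (v : ℕ → W → TV × TV) :
    Formula → W → TV × TV
  | .var p, w => v p w
  | .neg φ, w => ((kval R v φ w).2, (kval R v φ w).1)
  | .and φ ψ, w => ((kval R v φ w).1 ⊓ (kval R v ψ w).1, (kval R v φ w).2 ⊔ (kval R v ψ w).2)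
  | .or φ ψ, w => ((kval R v φ w).1 ⊔ (kval R v ψ w).1, (kval R v φ w).2 ⊓ (kval R v ψ w).2)
  | .imp φ ψ, w =>
      (gimp (kval R v φ w).1 (kval R v ψ w).1, gcoimp (kval R v ψ w).2 (kval R v φ w).2)
  | .coimp φ ψ, w =>
      (gcoimp (kval R v φ w).1 (kval R v ψ w).1, gimp (kval R v ψ w).2 (kval R v φ w).2)
  | .box φ, w =>
      (sInf ((fun w' => (kval R v φ w').1) '' {w' | R w w'}),
       sSup ((fun w' => (kval R v φ w').2) '' {w' | R w w'}))
  | .dia φ, w =>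
      (sSup ((fun w' => (kval R v φ w').1) '' {w' | R w w'}),
       sInf ((fun w' => (kval R v φ w').2) '' {w' | R w w'}))

open unitInterval

/-- `symm` as an order isomorphism to the dual. -/
noncomputable def symmIso : TV ≃o TVᵒᵈ where
  toFun x := OrderDual.toDual (σ x)
  invFun x := σ (OrderDual.ofDual x)
  left_inv x := symm_symm x
  right_inv x := congrArg OrderDual.toDual (symm_symm _)
  map_rel_iff' := @fun a b => by
    show OrderDual.toDual (σ a) ≤ OrderDual.toDual (σ b) ↔ a ≤ b
    exact OrderDual.toDual_le_toDual.trans symm_le_symm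

lemma symm_sInf (S : Set TV) : σ (sInf S) = sSup (σ '' S) := by
  have h : IsGLB S (sInf S) := isGLB_sInf S
  refine (IsLUB.sSup_eq ⟨?_, ?_⟩).symm
  · rintro _ ⟨a, ha, rfl⟩
    exact unitInterval.symm_le_symm.mpr (h.1 ha)
  · intro b hb
    have : σ b ≤ sInf S := le_sInf fun a ha => by
      have := hb ⟨a, ha, rfl⟩
      calc σ b ≤ σ (σ a) := unitInterval.symm_le_symm.mpr this
        _ = a := unitInterval.symm_symm a
    calc σ (sInf S) ≤ σ (σ b) := unitInterval.symm_le_symm.mpr this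
      _ = b := unitInterval.symm_symm b

lemma symm_sSup (S : Set TV) : σ (sSup S) = sInf (σ '' S) := by
  have h : IsLUB S (sSup S) := isLUB_sSup S
  refine (IsGLB.sInf_eq ⟨?_, ?_⟩).symm
  · rintro _ ⟨a, ha, rfl⟩
    exact unitInterval.symm_le_symm.mpr (h.1 ha)
  · intro b hb
    have : sSup S ≤ σ b := sSup_le fun a ha => by
      have := hb ⟨a, ha, rfl⟩
      calc a = σ (σ a) := (unitInterval.symm_symm a).symm
        _ ≤ σ b := unitInterval.symm_le_symm.mpr this
    calc b = σ (σ b) := (unitInterval.symm_symm b).symm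
      _ ≤ σ (sSup S) := unitInterval.symm_le_symm.mpr this

lemma symm_inf (a b : TV) : σ (a ⊓ b) = σ a ⊔ σ b := by
  rcases le_total a b with h | h <;>
    simp [inf_eq_left.mpr, inf_eq_right.mpr, h, sup_eq_left.mpr, sup_eq_right.mpr,
      symm_le_symm.mpr h, inf_of_le_left, inf_of_le_right, sup_of_le_left, sup_of_le_right]

lemma symm_sup (a b : TV) : σ (a ⊔ b) = σ a ⊓ σ b := by
  rcases le_total a b with h | h <;>
    simp [h, symm_le_symm.mpr h, inf_of_le_left, inf_of_le_right, sup_of_le_left, sup_of_le_right]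

lemma symm_gcoimp (a b : TV) : σ (gcoimp a b) = gimp (σ b) (σ a) := by
  unfold gcoimp gimp
  rcases le_or_gt a b with h | h
  · simp [h, symm_le_symm.mpr h, symm_zero]
  · have h' : ¬ a ≤ b := not_le.mpr h
    have h'' : ¬ σ b ≤ σ a := by rw [symm_le_symm]; exact h'
    simp [h', h'']

lemma symm_gimp (a b : TV) : σ (gimp a b) = gcoimp (σ b) (σ a) := by
  unfold gcoimp gimp
  rcases le_or_gt a b with h | h
  · simp [h, symm_le_symm.mpr h, symm_one]
  · have h' : ¬ a ≤ b := not_le.mpr h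
    have h'' : ¬ σ b ≤ σ a := by rw [symm_le_symm]; exact h'
    simp [h', h'']

/-- flipping a KG² model by `v*₁(p,w) = 1 − v₂(p,w)`, `v*₂(p,w) = 1 − v₁(p,w)`
propagates to all formulas (here `unitInterval.symm x = 1 - x`). -/
theorem stmt0 {W : Type} [Nonempty W] (R : W → W → Prop)
    (v vstar : ℕ → W → TV × TV)
    (hstar : ∀ p w, vstar p w = (unitInterval.symm (v p w).2, unitInterval.symm (v p w).1))
    (φ : Formula) (w : W) :
    (kval R vstar φ w).1 = unitInterval.symm (kval R v φ w).2 ∧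
    (kval R vstar φ w).2 = unitInterval.symm (kval R v φ w).1 := by
  induction φ generalizing w with
  | var p => rw [kval, kval, hstar p w]; exact ⟨rfl, rfl⟩
  | neg φ ih => exact ⟨(ih w).2, (ih w).1⟩
  | and φ ψ ihφ ihψ =>
      constructor
      · rw [kval, kval, symm_sup]; simp [(ihφ w).1, (ihψ w).1]
      · rw [kval, kval, symm_inf]; simp [(ihφ w).2, (ihψ w).2]
  | or φ ψ ihφ ihψ =>
      constructor
      · rw [kval, kval, symm_inf]; simp [(ihφ w).1, (ihψ w).1]
      · rw [kval, kval, symm_sup]; simp [(ihφ w).2, (ihψ w).2]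
  | imp φ ψ ihφ ihψ =>
      constructor
      · rw [kval, kval]; simp only [symm_gcoimp, (ihφ w).1, (ihψ w).1]
      · rw [kval, kval]; simp only [symm_gimp, (ihφ w).2, (ihψ w).2]
  | coimp φ ψ ihφ ihψ =>
      constructor
      · rw [kval, kval]; simp only [symm_gimp, (ihφ w).1, (ihψ w).1]
      · rw [kval, kval]; simp only [symm_gcoimp, (ihφ w).2, (ihψ w).2]
  | box φ ih =>
      constructor
      · rw [kval, kval, symm_sSup, Set.image_image]
        exact congrArg sInf (Set.image_congr' (fun w' => (ih w').1))
      · rw [kval, kval, symm_sInf, Set.image_image]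
        exact congrArg sSup (Set.image_congr' (fun w' => (ih w').2))
  | dia φ ih =>
      constructor
      · rw [kval, kval, symm_sInf, Set.image_image]
        exact congrArg sSup (Set.image_congr' (fun w' => (ih w').1))
      · rw [kval, kval, symm_sSup, Set.image_image]
        exact congrArg sInf (Set.image_congr' (fun w' => (ih w').2))
end

section
/- For every crisp frame F and every formula φ of biL¬_{□,◇}: F ⊨_{KG²} φ (i.e. v₁(φ,w)=1 and v₂(φ,w)=0 for every KG² model on F and every world w) if and only if v₁(φ,w)=1 for every KG² model on F and every world w. -/
open unitInterval in
lemma sig_le_sig {a b : TV} : symm a ≤ symm b ↔ b ≤ a := by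
  rw [← Subtype.coe_le_coe, ← Subtype.coe_le_coe,
    unitInterval.coe_symm_eq, unitInterval.coe_symm_eq]
  constructor <;> intro h <;> linarith

open unitInterval in
lemma sig_sSup (S : Set TV) : symm (sSup S) = sInf (symm '' S) := by
  apply le_antisymm
  · exact le_sInf (by rintro b ⟨a, ha, rfl⟩; exact sig_le_sig.2 (le_sSup ha))
  · have h : sSup S ≤ symm (sInf (symm '' S)) := by
      apply sSup_le; intro a ha
      have h1 : sInf (symm '' S) ≤ symm a := sInf_le ⟨a, ha, rfl⟩
      have h2 := sig_le_sig.2 h1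
      rwa [unitInterval.symm_symm] at h2
    have h2 := sig_le_sig.2 h
    rwa [unitInterval.symm_symm] at h2

open unitInterval in
lemma sig_sInf (S : Set TV) : symm (sInf S) = sSup (symm '' S) := by
  apply le_antisymm
  · have h : symm (sSup (symm '' S)) ≤ sInf S := by
      apply le_sInf; intro a ha
      have h1 : symm a ≤ sSup (symm '' S) := le_sSup ⟨a, ha, rfl⟩
      have h2 := sig_le_sig.2 h1
      rwa [unitInterval.symm_symm] at h2
    have h2 := sig_le_sig.2 h
    rwa [unitInterval.symm_symm] at h2
  · exact sSup_le (by rintro b ⟨a, ha, rfl⟩; exact sig_le_sig.2 (sInf_le ha))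

open unitInterval in
lemma sig_inf (a b : TV) : symm (a ⊓ b) = symm a ⊔ symm b := by
  rcases le_total a b with h | h
  · rw [inf_eq_left.2 h, sup_eq_left.2 (sig_le_sig.2 h)]
  · rw [inf_eq_right.2 h, sup_eq_right.2 (sig_le_sig.2 h)]

open unitInterval in
lemma sig_sup (a b : TV) : symm (a ⊔ b) = symm a ⊓ symm b := by
  rcases le_total a b with h | h
  · rw [sup_eq_right.2 h, inf_eq_right.2 (sig_le_sig.2 h)]
  · rw [sup_eq_left.2 h, inf_eq_left.2 (sig_le_sig.2 h)]

open unitInterval in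
lemma sig_gcoimp (a b : TV) : symm (gcoimp b a) = gimp (symm a) (symm b) := by
  unfold gimp gcoimp
  by_cases h : b ≤ a
  · rw [if_pos h, if_pos (sig_le_sig.2 h), unitInterval.symm_zero]
  · rw [if_neg h, if_neg (fun hc => h (sig_le_sig.1 hc))]

open unitInterval in
lemma sig_gimp (a b : TV) : symm (gimp a b) = gcoimp (symm b) (symm a) := by
  unfold gimp gcoimp
  by_cases h : a ≤ b
  · rw [if_pos h, if_pos (sig_le_sig.2 h), unitInterval.symm_one]
  · rw [if_neg h, if_neg (fun hc => h (sig_le_sig.1 hc))]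

open unitInterval in
lemma kval_swap {W : Type} (R : W → W → Prop) (v : ℕ → W → TV × TV) (φ : Formula) :
    ∀ w, kval R (fun p w => (symm (v p w).2, symm (v p w).1)) φ w
      = (symm (kval R v φ w).2, symm (kval R v φ w).1) := by
  induction φ with
  | var p => intro w; simp [kval]
  | neg φ ih => intro w; simp [kval, ih]
  | and φ ψ ih1 ih2 => intro w; simp [kval, ih1, ih2, sig_inf, sig_sup]
  | or φ ψ ih1 ih2 => intro w; simp [kval, ih1, ih2, sig_inf, sig_sup]
  | imp φ ψ ih1 ih2 => intro w; simp [kval, ih1, ih2, sig_gimp, sig_gcoimp]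
  | coimp φ ψ ih1 ih2 => intro w; simp [kval, ih1, ih2, sig_gimp, sig_gcoimp]
  | box φ ih =>
      intro w
      simp only [kval, ih, sig_sSup, sig_sInf, Set.image_image]
  | dia φ ih =>
      intro w
      simp only [kval, ih, sig_sSup, sig_sInf, Set.image_image]

/-- `F ⊨_{KG²} φ` iff `v₁(φ,w) = 1` in every KG² model on `F` at every world. -/
theorem stmt1 {W : Type} [Nonempty W] (R : W → W → Prop) (φ : Formula) :
    (∀ (v : ℕ → W → TV × TV) (w : W), (kval R v φ w).1 = 1 ∧ (kval R v φ w).2 = 0) ↔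
    (∀ (v : ℕ → W → TV × TV) (w : W), (kval R v φ w).1 = 1) := by
  constructor
  · intro h v w; exact (h v w).1
  · intro h v w
    refine ⟨h v w, ?_⟩
    have h2 := h (fun p w => (unitInterval.symm (v p w).2, unitInterval.symm (v p w).1)) w
    rw [kval_swap] at h2
    simp only at h2
    have h3 : (kval R v φ w).2 = unitInterval.symm 1 := by
      rw [← h2, unitInterval.symm_symm]
    rwa [unitInterval.symm_one] at h3
end

section
/- A crisp frame F=(W,R) is finitely branching (i.e. R(w)={w' : wRw'} is finite for every w ∈ W) if and only if F ⊨_{KbiG} 𝟏 ⧀ ◇((p ⧀ q) ∧ q). -/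
/-- ¬-free formulas: the language `biL_{□,◇}` over the countable variable set `ℕ`. -/
inductive FormulaB : Type
  | var : ℕ → FormulaB
  | and : FormulaB → FormulaB → FormulaB
  | or : FormulaB → FormulaB → FormulaB
  | imp : FormulaB → FormulaB → FormulaB
  | coimp : FormulaB → FormulaB → FormulaB
  | box : FormulaB → FormulaB
  | dia : FormulaB → FormulaB

/-- KbiG valuation on a crisp frame `(W, R)` (`inf ∅ = 1`, `sup ∅ = 0`). -/
noncomputable def bval {W : Type} (R : W → W → Prop) (v : ℕ → W → TV) :
    FormulaB → W → TV
  | .var p, w => v p w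
  | .and φ ψ, w => bval R v φ w ⊓ bval R v ψ w
  | .or φ ψ, w => bval R v φ w ⊔ bval R v ψ w
  | .imp φ ψ, w => gimp (bval R v φ w) (bval R v ψ w)
  | .coimp φ ψ, w => gcoimp (bval R v φ w) (bval R v ψ w)
  | .box φ, w => sInf ((fun w' => bval R v φ w') '' {w' | R w w'})
  | .dia φ, w => sSup ((fun w' => bval R v φ w') '' {w' | R w w'})

/-- `𝟏 := p → p`. -/
def bone : FormulaB := .imp (.var 0) (.var 0)

/-- `𝟎 := p ⧀ p`. -/
def bzero : FormulaB := .coimp (.var 0) (.var 0)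

/-- Gödel negation `∼φ := φ → 𝟎`. -/
def bnegG (φ : FormulaB) : FormulaB := .imp φ bzero

/-- Baaz delta `Δτ := ∼(𝟏 ⧀ τ)`. -/
def bDelta (τ : FormulaB) : FormulaB := bnegG (.coimp bone τ)

/-- The formula `𝟏 ⧀ ◇((p ⧀ q) ∧ q)` with `p := var 0`, `q := var 1`. -/
def phiFin : FormulaB := .coimp bone (.dia (.and (.coimp (.var 0) (.var 1)) (.var 1)))

lemma tv_zero_lt_one : (0 : TV) < 1 := by
  rw [← Subtype.coe_lt_coe]; norm_num

lemma tv_key (a b : TV) : gcoimp a b ⊓ b < 1 := by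
  unfold gcoimp
  split
  · exact lt_of_le_of_lt inf_le_left tv_zero_lt_one
  · next h =>
    refine lt_of_le_of_lt inf_le_right (lt_of_lt_of_le (lt_of_not_ge h) ?_)
    exact a.2.2

/-- the sequence n/(n+1) in TV -/
noncomputable def tseq (n : ℕ) : TV :=
  ⟨(n : ℝ) / (n + 1), ⟨by positivity, by
    rw [div_le_one (by positivity)]; linarith⟩⟩

lemma tseq_lt_one (n : ℕ) : tseq n < 1 := by
  rw [← Subtype.coe_lt_coe]
  show (n : ℝ) / (n + 1) < 1
  rw [div_lt_one (by positivity)]; linarith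

/-- a crisp frame is finitely branching iff it validates `𝟏 ⧀ ◇((p ⧀ q) ∧ q)`. -/
theorem stmt3 {W : Type} [Nonempty W] (R : W → W → Prop) :
    (∀ w : W, {w' | R w w'}.Finite) ↔
    (∀ (v : ℕ → W → TV) (w : W), bval R v phiFin w = 1) := by
  constructor
  · intro hfin v w
    have hone : bval R v bone w = 1 := by simp [bone, bval, gimp]
    show gcoimp (bval R v bone w) _ = 1
    rw [hone]
    show gcoimp 1 (sSup ((fun w' => bval R v (.and (.coimp (.var 0) (.var 1)) (.var 1)) w') '' {w' | R w w'})) = 1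
    set S : Set TV :=
      (fun w' => bval R v (.and (.coimp (.var 0) (.var 1)) (.var 1)) w') '' {w' | R w w'}
      with hSdef
    have hSfin : S.Finite := (hfin w).image _
    have hlt : sSup S < 1 := by
      rcases S.eq_empty_or_nonempty with h | h
      · rw [h, sSup_empty]
        exact lt_of_le_of_lt bot_le tv_zero_lt_one
      · have hmem := h.csSup_mem hSfin
        rcases hmem with ⟨w', _, hw'⟩
        rw [← hw']
        show bval R v (.and (.coimp (.var 0) (.var 1)) (.var 1)) w' < 1
        simp only [bval]
        exact tv_key _ _
    unfold gcoimp
    rw [if_neg (not_le_of_gt hlt)]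
  · intro hval
    by_contra hcon
    push_neg at hcon
    obtain ⟨w, hw⟩ := hcon
    have hinf : {w' | R w w'}.Infinite := hw
    set e := hinf.natEmbedding with he
    set f : ℕ → W := fun n => (e n : W) with hf
    have hfR : ∀ n, R w (f n) := fun n => (e n).2
    have hfinj : Function.Injective f := fun a b hab => by
      have := e.injective (Subtype.ext hab); exact this
    classical
    set v : ℕ → W → TV := fun i u =>
      if i = 1 then (if h : ∃ n, f n = u then tseq h.choose else 0) else 1 with hv
    have hv0 : ∀ u, v 0 u = 1 := fun u => by simp [hv]
    have hv1 : ∀ m, v 1 (f m) = tseq m := by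
      intro m
      have hex : ∃ n, f n = f m := ⟨m, rfl⟩
      have : hex.choose = m := hfinj hex.choose_spec
      simp [hv, dif_pos hex, this]
    have hmem : ∀ m, tseq m ∈
        ((fun w' => bval R v (.and (.coimp (.var 0) (.var 1)) (.var 1)) w') '' {w' | R w w'}) := by
      intro m
      refine ⟨f m, hfR m, ?_⟩
      show bval R v (.and (.coimp (.var 0) (.var 1)) (.var 1)) (f m) = tseq m
      simp only [bval, hv0, hv1]
      have h1 : gcoimp 1 (tseq m) = 1 := by
        unfold gcoimp
        rw [if_neg (not_le_of_gt (tseq_lt_one m))]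
      rw [h1, inf_eq_right.mpr (show tseq m ≤ (1:TV) from (tseq m).2.2)]
    set X : TV := sSup
      ((fun w' => bval R v (.and (.coimp (.var 0) (.var 1)) (.var 1)) w') '' {w' | R w w'}) with hX
    have hX1 : X = 1 := by
      refine le_antisymm X.2.2 ?_
      by_contra hle
      have hXlt : X < 1 := lt_of_not_ge hle
      have hXr : (X : ℝ) < 1 := hXlt
      obtain ⟨n, hn⟩ := exists_nat_one_div_lt (show (0:ℝ) < 1 - X by linarith)
      have htn : (X : ℝ) < tseq n := by
        show (X : ℝ) < (n : ℝ) / (n + 1)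
        have hpos : (0:ℝ) < (n : ℝ) + 1 := by positivity
        have : (n : ℝ) / (n + 1) = 1 - 1 / (n + 1) := by field_simp; ring
        rw [this]; linarith
      exact absurd (le_sSup (hmem n)) (not_le_of_gt htn)
    have := hval v w
    have hone : bval R v bone w = 1 := by simp [bone, bval, gimp]
    rw [show bval R v phiFin w = gcoimp (bval R v bone w) X from rfl, hone, hX1] at this
    unfold gcoimp at this
    rw [if_pos le_rfl] at this
    exact absurd (congrArg Subtype.val this) (by norm_num)
end

section
/- A crisp frame F=(W,R) is finitely branching (i.e. R(w)={w' : wRw'} is finite for every w ∈ W) if and only if F ⊨_{KbiG} ∼∼□(p ∨ ∼p), where ∼φ := φ→𝟎. Hence finitely branching crisp frames are definable in the □-fragment without coimplication. -/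
-- helpers
lemma tv_one_ne_zero : (1:TV) ≠ 0 := fun h => one_ne_zero (congrArg Subtype.val h)

lemma bval_bzero {W : Type} (R : W → W → Prop) (v : ℕ → W → TV) (w : W) :
    bval R v bzero w = 0 := by
  simp [bval, bzero, gcoimp]

lemma bval_bnegG {W : Type} (R : W → W → Prop) (v : ℕ → W → TV) (φ : FormulaB) (w : W) :
    bval R v (bnegG φ) w = if bval R v φ w = 0 then 1 else 0 := by
  show gimp _ _ = _
  rw [bval_bzero]
  unfold gimp
  simp [le_zero_iff]


/-- a crisp frame is finitely branching iff it validates `∼∼□(p ∨ ∼p)`. -/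
theorem stmt6 {W : Type} [Nonempty W] (R : W → W → Prop) :
    (∀ w : W, {w' | R w w'}.Finite) ↔
    (∀ (v : ℕ → W → TV) (w : W),
      bval R v (bnegG (bnegG (.box (.or (.var 0) (bnegG (.var 0)))))) w = 1) := by
  constructor
  · intro hfin v w
    rw [bval_bnegG, bval_bnegG]
    have hpos : bval R v (.box (.or (.var 0) (bnegG (.var 0)))) w ≠ 0 := by
      show sInf ((fun w' => bval R v (.or (.var 0) (bnegG (.var 0))) w') '' {w' | R w w'}) ≠ 0
      set S := (fun w' => bval R v (.or (.var 0) (bnegG (.var 0))) w') '' {w' | R w w'} with hS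
      have hSpos : ∀ a ∈ S, a ≠ 0 := by
        rintro a ⟨w', _, rfl⟩
        show bval R v (.var 0) w' ⊔ bval R v (bnegG (.var 0)) w' ≠ 0
        rw [bval_bnegG]
        by_cases h : bval R v (.var 0) w' = 0
        · simp [h, tv_one_ne_zero]
        · intro hc
          exact h (le_zero_iff.mp (hc ▸ le_sup_left))
      rcases S.eq_empty_or_nonempty with hE | hne
      · rw [hE, sInf_empty]
        exact fun h => tv_one_ne_zero (h ▸ rfl)
      · have hSfin : S.Finite := (hfin w).image _
        obtain ⟨m, hmS, hmin⟩ := Set.exists_min_image S id hSfin hne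
        intro h0
        have : m ≤ sInf S := le_sInf (fun b hb => hmin b hb)
        rw [h0] at this
        exact hSpos m hmS (le_zero_iff.mp this)
    simp [hpos, tv_one_ne_zero]
  · intro hval w
    by_contra hinf
    classical
    have hI : {w' | R w w'}.Infinite := hinf
    let f := hI.natEmbedding
    have ht : ∀ n : ℕ, (0:ℝ) ≤ 1/(n+1) ∧ (1:ℝ)/(n+1) ≤ 1 := by
      intro n
      constructor
      · positivity
      · rw [div_le_one (by positivity)]
        exact le_add_of_nonneg_left (n.cast_nonneg)
    let t : ℕ → TV := fun n => ⟨1/(n+1), (ht n).1, (ht n).2⟩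
    let v0 : ℕ → W → TV := fun _ x => if h : ∃ n, ((f n : W) = x) then t (Nat.find h) else 1
    have hv0 : ∀ n : ℕ, v0 0 (f n) = t n := by
      intro n
      have h : ∃ m, ((f m : W) = (f n : W)) := ⟨n, rfl⟩
      show dite _ _ _ = _
      rw [dif_pos h]
      congr 1
      exact f.injective (Subtype.coe_injective (Nat.find_spec h))
    have hbox : bval R v0 (.box (.or (.var 0) (bnegG (.var 0)))) w = 0 := by
      show sInf ((fun w' => bval R v0 (.or (.var 0) (bnegG (.var 0))) w') '' {w' | R w w'}) = 0
      set X : TV := sInf ((fun w' => bval R v0 (.or (.var 0) (bnegG (.var 0))) w') '' {w' | R w w'}) with hX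
      apply le_antisymm _ (unitInterval.nonneg')
      have key : ∀ n : ℕ, X ≤ t n := by
        intro n
        have hmem : ((f n : W)) ∈ {w' | R w w'} := (f n).2
        have : bval R v0 (.or (.var 0) (bnegG (.var 0))) (f n) = t n := by
          show bval R v0 (.var 0) (f n) ⊔ bval R v0 (bnegG (.var 0)) (f n) = t n
          rw [bval_bnegG]
          show v0 0 (f n) ⊔ (if v0 0 (f n) = 0 then 1 else 0) = t n
          rw [hv0 n]
          have htn : t n ≠ 0 := by
            intro h
            have := congrArg Subtype.val h
            simp only [t] at this
            exact absurd this (by positivity)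
          simp [htn]
        calc X ≤ bval R v0 (.or (.var 0) (bnegG (.var 0))) (f n) :=
              sInf_le (Set.mem_image_of_mem _ hmem)
          _ = t n := this
      have hle : ∀ n : ℕ, (X : ℝ) ≤ 1/(n+1) := fun n => Subtype.coe_le_coe.mpr (key n)
      rw [← Subtype.coe_le_coe]
      show (X : ℝ) ≤ 0
      by_contra hc
      push_neg at hc
      obtain ⟨n, hn⟩ := exists_nat_one_div_lt hc
      exact absurd (hle n) (by push_neg; exact_mod_cast hn)
    have := hval v0 w
    rw [bval_bnegG, bval_bnegG, hbox] at this
    simp [tv_one_ne_zero] at this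
end

section
/- □ and ◇ are not interdefinable over finitely branching crisp frames: there is no ◇-free formula ψ of biL_{□,◇} in the single variable p such that v(ψ,w)=v(◇p,w) for every KbiG model on a finitely branching crisp frame and every world w, and there is no □-free formula χ of biL_{□,◇} in the single variable p such that v(χ,w)=v(□p,w) for every KbiG model on a finitely branching crisp frame and every world w. -/
/-- `φ` contains no `◇`. -/
def FormulaB.diaFree : FormulaB → Prop
  | .var _ => True
  | .and φ ψ => φ.diaFree ∧ ψ.diaFree
  | .or φ ψ => φ.diaFree ∧ ψ.diaFree
  | .imp φ ψ => φ.diaFree ∧ ψ.diaFree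
  | .coimp φ ψ => φ.diaFree ∧ ψ.diaFree
  | .box φ => φ.diaFree
  | .dia _ => False

/-- `φ` contains no `□`. -/
def FormulaB.boxFree : FormulaB → Prop
  | .var _ => True
  | .and φ ψ => φ.boxFree ∧ ψ.boxFree
  | .or φ ψ => φ.boxFree ∧ ψ.boxFree
  | .imp φ ψ => φ.boxFree ∧ ψ.boxFree
  | .coimp φ ψ => φ.boxFree ∧ ψ.boxFree
  | .box _ => False
  | .dia φ => φ.boxFree

/-- `φ` uses only the propositional variable `p`. -/
def FormulaB.onlyVar (p : ℕ) : FormulaB → Prop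
  | .var q => q = p
  | .and φ ψ => φ.onlyVar p ∧ ψ.onlyVar p
  | .or φ ψ => φ.onlyVar p ∧ ψ.onlyVar p
  | .imp φ ψ => φ.onlyVar p ∧ ψ.onlyVar p
  | .coimp φ ψ => φ.onlyVar p ∧ ψ.onlyVar p
  | .box φ => φ.onlyVar p
  | .dia φ => φ.onlyVar p

noncomputable def ta : TV := ⟨1/3, by norm_num⟩
noncomputable def tb : TV := ⟨1/2, by norm_num⟩

def Rc : Fin 3 → Fin 3 → Prop := fun x y => x = 0 ∧ (y = 1 ∨ y = 2)

noncomputable def vc : ℕ → Fin 3 → TV :=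
  fun _ w => if w = 1 then ta else if w = 2 then tb else 0

lemma hR0 : {w' : Fin 3 | Rc 0 w'} = {1, 2} := by ext w; simp [Rc]
lemma hR1 : {w' : Fin 3 | Rc 1 w'} = ∅ := by ext w; simp [Rc]
lemma hR2 : {w' : Fin 3 | Rc 2 w'} = ∅ := by ext w; simp [Rc]

lemma box0 (φ : FormulaB) :
    bval Rc vc (.box φ) 0 = bval Rc vc φ 1 ⊓ bval Rc vc φ 2 := by
  simp only [bval]; rw [hR0, Set.image_pair, sInf_pair]
lemma dia0 (φ : FormulaB) :
    bval Rc vc (.dia φ) 0 = bval Rc vc φ 1 ⊔ bval Rc vc φ 2 := by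
  simp only [bval]; rw [hR0, Set.image_pair, sSup_pair]
lemma box1 (φ : FormulaB) : bval Rc vc (.box φ) 1 = 1 := by
  simp only [bval]; rw [hR1, Set.image_empty, sInf_empty]; rfl
lemma box2 (φ : FormulaB) : bval Rc vc (.box φ) 2 = 1 := by
  simp only [bval]; rw [hR2, Set.image_empty, sInf_empty]; rfl
lemma dia1 (φ : FormulaB) : bval Rc vc (.dia φ) 1 = 0 := by
  simp only [bval]; rw [hR1, Set.image_empty, sSup_empty]; rfl
lemma dia2 (φ : FormulaB) : bval Rc vc (.dia φ) 2 = 0 := by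
  simp only [bval]; rw [hR2, Set.image_empty, sSup_empty]; rfl

lemma l0a : (0:TV) ≤ ta := by rw [← Subtype.coe_le_coe]; norm_num [ta]
lemma la0 : ¬ ta ≤ (0:TV) := by rw [← Subtype.coe_le_coe]; norm_num [ta]
lemma l0b : (0:TV) ≤ tb := by rw [← Subtype.coe_le_coe]; norm_num [tb]
lemma lb0 : ¬ tb ≤ (0:TV) := by rw [← Subtype.coe_le_coe]; norm_num [tb]
lemma lab : ta ≤ tb := by rw [← Subtype.coe_le_coe]; norm_num [ta, tb]
lemma lba : ¬ tb ≤ ta := by rw [← Subtype.coe_le_coe]; norm_num [ta, tb]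
lemma la1 : ta ≤ (1:TV) := by rw [← Subtype.coe_le_coe]; norm_num [ta]
lemma l1a : ¬ (1:TV) ≤ ta := by rw [← Subtype.coe_le_coe]; norm_num [ta]
lemma lb1 : tb ≤ (1:TV) := by rw [← Subtype.coe_le_coe]; norm_num [tb]
lemma l1b : ¬ (1:TV) ≤ tb := by rw [← Subtype.coe_le_coe]; norm_num [tb]
lemma l01 : (0:TV) ≤ 1 := by rw [← Subtype.coe_le_coe]; norm_num
lemma l10 : ¬ (1:TV) ≤ 0 := by rw [← Subtype.coe_le_coe]; norm_num

lemma na0 : ta ≠ 0 := by rw [Ne, Subtype.ext_iff]; norm_num [ta]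
lemma nb0 : tb ≠ 0 := by rw [Ne, Subtype.ext_iff]; norm_num [tb]
lemma na1 : ta ≠ 1 := by rw [Ne, Subtype.ext_iff]; norm_num [ta]
lemma nb1 : tb ≠ 1 := by rw [Ne, Subtype.ext_iff]; norm_num [tb]
lemma nab : ta ≠ tb := by rw [Ne, Subtype.ext_iff]; norm_num [ta, tb]

lemma key1 : ∀ φ : FormulaB, φ.diaFree →
    ((bval Rc vc φ 1 = 0 ∧ bval Rc vc φ 2 = 0) ∨
     (bval Rc vc φ 1 = 1 ∧ bval Rc vc φ 2 = 1) ∨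
     (bval Rc vc φ 1 = ta ∧ bval Rc vc φ 2 = tb)) ∧
    (bval Rc vc φ 0 = 0 ∨ bval Rc vc φ 0 = ta ∨ bval Rc vc φ 0 = 1) := by
  intro φ hdf
  induction φ with
  | var n =>
    refine ⟨Or.inr (Or.inr ?_), Or.inl ?_⟩ <;> simp [bval, vc]
  | and φ ψ ihφ ihψ =>
    obtain ⟨h1, h2⟩ := hdf
    obtain ⟨p1, p0⟩ := ihφ h1; obtain ⟨q1, q0⟩ := ihψ h2
    constructor
    · rcases p1 with ⟨e1,e2⟩|⟨e1,e2⟩|⟨e1,e2⟩ <;> rcases q1 with ⟨f1,f2⟩|⟨f1,f2⟩|⟨f1,f2⟩ <;>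
        simp [bval, e1, e2, f1, f2, inf_eq_left, inf_eq_right,
          l0a, la0, l0b, lb0, lab, lba, la1, l1a, lb1, l1b, l01, l10, na0, nb0, na1, nb1, nab]
    · rcases p0 with e|e|e <;> rcases q0 with f|f|f <;>
        simp [bval, e, f, inf_eq_left, inf_eq_right,
          l0a, la0, l0b, lb0, lab, lba, la1, l1a, lb1, l1b, l01, l10, na0, nb0, na1, nb1, nab]
  | or φ ψ ihφ ihψ =>
    obtain ⟨h1, h2⟩ := hdf
    obtain ⟨p1, p0⟩ := ihφ h1; obtain ⟨q1, q0⟩ := ihψ h2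
    constructor
    · rcases p1 with ⟨e1,e2⟩|⟨e1,e2⟩|⟨e1,e2⟩ <;> rcases q1 with ⟨f1,f2⟩|⟨f1,f2⟩|⟨f1,f2⟩ <;>
        simp [bval, e1, e2, f1, f2, sup_eq_left, sup_eq_right,
          l0a, la0, l0b, lb0, lab, lba, la1, l1a, lb1, l1b, l01, l10, na0, nb0, na1, nb1, nab]
    · rcases p0 with e|e|e <;> rcases q0 with f|f|f <;>
        simp [bval, e, f, sup_eq_left, sup_eq_right,
          l0a, la0, l0b, lb0, lab, lba, la1, l1a, lb1, l1b, l01, l10, na0, nb0, na1, nb1, nab]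
  | imp φ ψ ihφ ihψ =>
    obtain ⟨h1, h2⟩ := hdf
    obtain ⟨p1, p0⟩ := ihφ h1; obtain ⟨q1, q0⟩ := ihψ h2
    constructor
    · rcases p1 with ⟨e1,e2⟩|⟨e1,e2⟩|⟨e1,e2⟩ <;> rcases q1 with ⟨f1,f2⟩|⟨f1,f2⟩|⟨f1,f2⟩ <;>
        simp [bval, gimp, e1, e2, f1, f2,
          l0a, la0, l0b, lb0, lab, lba, la1, l1a, lb1, l1b, l01, l10, na0, nb0, na1, nb1, nab]
    · rcases p0 with e|e|e <;> rcases q0 with f|f|f <;>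
        simp [bval, gimp, e, f,
          l0a, la0, l0b, lb0, lab, lba, la1, l1a, lb1, l1b, l01, l10, na0, nb0, na1, nb1, nab]
  | coimp φ ψ ihφ ihψ =>
    obtain ⟨h1, h2⟩ := hdf
    obtain ⟨p1, p0⟩ := ihφ h1; obtain ⟨q1, q0⟩ := ihψ h2
    constructor
    · rcases p1 with ⟨e1,e2⟩|⟨e1,e2⟩|⟨e1,e2⟩ <;> rcases q1 with ⟨f1,f2⟩|⟨f1,f2⟩|⟨f1,f2⟩ <;>
        simp [bval, gcoimp, e1, e2, f1, f2,
          l0a, la0, l0b, lb0, lab, lba, la1, l1a, lb1, l1b, l01, l10, na0, nb0, na1, nb1, nab]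
    · rcases p0 with e|e|e <;> rcases q0 with f|f|f <;>
        simp [bval, gcoimp, e, f,
          l0a, la0, l0b, lb0, lab, lba, la1, l1a, lb1, l1b, l01, l10, na0, nb0, na1, nb1, nab]
  | box φ ihφ =>
    obtain ⟨p1, p0⟩ := ihφ hdf
    refine ⟨Or.inr (Or.inl ⟨box1 φ, box2 φ⟩), ?_⟩
    rw [box0]
    rcases p1 with ⟨e1,e2⟩|⟨e1,e2⟩|⟨e1,e2⟩ <;>
      simp [e1, e2, inf_eq_left, inf_eq_right, lab, l0a, la0]
  | dia φ ihφ => exact hdf.elim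

lemma key2 : ∀ φ : FormulaB, φ.boxFree →
    ((bval Rc vc φ 1 = 0 ∧ bval Rc vc φ 2 = 0) ∨
     (bval Rc vc φ 1 = 1 ∧ bval Rc vc φ 2 = 1) ∨
     (bval Rc vc φ 1 = ta ∧ bval Rc vc φ 2 = tb)) ∧
    (bval Rc vc φ 0 = 0 ∨ bval Rc vc φ 0 = tb ∨ bval Rc vc φ 0 = 1) := by
  intro φ hbf
  induction φ with
  | var n =>
    refine ⟨Or.inr (Or.inr ?_), Or.inl ?_⟩ <;> simp [bval, vc]
  | and φ ψ ihφ ihψ =>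
    obtain ⟨h1, h2⟩ := hbf
    obtain ⟨p1, p0⟩ := ihφ h1; obtain ⟨q1, q0⟩ := ihψ h2
    constructor
    · rcases p1 with ⟨e1,e2⟩|⟨e1,e2⟩|⟨e1,e2⟩ <;> rcases q1 with ⟨f1,f2⟩|⟨f1,f2⟩|⟨f1,f2⟩ <;>
        simp [bval, e1, e2, f1, f2, inf_eq_left, inf_eq_right,
          l0a, la0, l0b, lb0, lab, lba, la1, l1a, lb1, l1b, l01, l10, na0, nb0, na1, nb1, nab]
    · rcases p0 with e|e|e <;> rcases q0 with f|f|f <;>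
        simp [bval, e, f, inf_eq_left, inf_eq_right,
          l0a, la0, l0b, lb0, lab, lba, la1, l1a, lb1, l1b, l01, l10, na0, nb0, na1, nb1, nab]
  | or φ ψ ihφ ihψ =>
    obtain ⟨h1, h2⟩ := hbf
    obtain ⟨p1, p0⟩ := ihφ h1; obtain ⟨q1, q0⟩ := ihψ h2
    constructor
    · rcases p1 with ⟨e1,e2⟩|⟨e1,e2⟩|⟨e1,e2⟩ <;> rcases q1 with ⟨f1,f2⟩|⟨f1,f2⟩|⟨f1,f2⟩ <;>
        simp [bval, e1, e2, f1, f2, sup_eq_left, sup_eq_right,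
          l0a, la0, l0b, lb0, lab, lba, la1, l1a, lb1, l1b, l01, l10, na0, nb0, na1, nb1, nab]
    · rcases p0 with e|e|e <;> rcases q0 with f|f|f <;>
        simp [bval, e, f, sup_eq_left, sup_eq_right,
          l0a, la0, l0b, lb0, lab, lba, la1, l1a, lb1, l1b, l01, l10, na0, nb0, na1, nb1, nab]
  | imp φ ψ ihφ ihψ =>
    obtain ⟨h1, h2⟩ := hbf
    obtain ⟨p1, p0⟩ := ihφ h1; obtain ⟨q1, q0⟩ := ihψ h2
    constructor
    · rcases p1 with ⟨e1,e2⟩|⟨e1,e2⟩|⟨e1,e2⟩ <;> rcases q1 with ⟨f1,f2⟩|⟨f1,f2⟩|⟨f1,f2⟩ <;>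
        simp [bval, gimp, e1, e2, f1, f2,
          l0a, la0, l0b, lb0, lab, lba, la1, l1a, lb1, l1b, l01, l10, na0, nb0, na1, nb1, nab]
    · rcases p0 with e|e|e <;> rcases q0 with f|f|f <;>
        simp [bval, gimp, e, f,
          l0a, la0, l0b, lb0, lab, lba, la1, l1a, lb1, l1b, l01, l10, na0, nb0, na1, nb1, nab]
  | coimp φ ψ ihφ ihψ =>
    obtain ⟨h1, h2⟩ := hbf
    obtain ⟨p1, p0⟩ := ihφ h1; obtain ⟨q1, q0⟩ := ihψ h2
    constructor
    · rcases p1 with ⟨e1,e2⟩|⟨e1,e2⟩|⟨e1,e2⟩ <;> rcases q1 with ⟨f1,f2⟩|⟨f1,f2⟩|⟨f1,f2⟩ <;>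
        simp [bval, gcoimp, e1, e2, f1, f2,
          l0a, la0, l0b, lb0, lab, lba, la1, l1a, lb1, l1b, l01, l10, na0, nb0, na1, nb1, nab]
    · rcases p0 with e|e|e <;> rcases q0 with f|f|f <;>
        simp [bval, gcoimp, e, f,
          l0a, la0, l0b, lb0, lab, lba, la1, l1a, lb1, l1b, l01, l10, na0, nb0, na1, nb1, nab]
  | box φ ihφ => exact hbf.elim
  | dia φ ihφ =>
    obtain ⟨p1, p0⟩ := ihφ hbf
    refine ⟨Or.inl ⟨dia1 φ, dia2 φ⟩, ?_⟩
    rw [dia0]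
    rcases p1 with ⟨e1,e2⟩|⟨e1,e2⟩|⟨e1,e2⟩ <;>
      simp [e1, e2, sup_eq_left, sup_eq_right, lab, lb1, l1b]

/-- over finitely branching crisp frames, no ◇-free formula in the single
variable `p` is equivalent to `◇p`, and no □-free formula in `p` is equivalent to `□p`. -/
theorem stmt7 :
    (¬ ∃ ψ : FormulaB, ψ.diaFree ∧ ψ.onlyVar 0 ∧
      ∀ (W : Type), Nonempty W → ∀ (R : W → W → Prop),
        (∀ w : W, {w' | R w w'}.Finite) →
        ∀ (v : ℕ → W → TV) (w : W), bval R v ψ w = bval R v (.dia (.var 0)) w) ∧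
    (¬ ∃ χ : FormulaB, χ.boxFree ∧ χ.onlyVar 0 ∧
      ∀ (W : Type), Nonempty W → ∀ (R : W → W → Prop),
        (∀ w : W, {w' | R w w'}.Finite) →
        ∀ (v : ℕ → W → TV) (w : W), bval R v χ w = bval R v (.box (.var 0)) w) := by
  constructor
  · rintro ⟨ψ, hdf, -, h⟩
    have he := h (Fin 3) ⟨0⟩ Rc (fun w => Set.toFinite _) vc 0
    have h2 : bval Rc vc (.dia (.var 0)) 0 = tb := by
      rw [dia0]; simp [bval, vc, sup_eq_right.mpr lab]
    have h3 := (key1 ψ hdf).2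
    rw [he, h2] at h3
    simp only [Subtype.ext_iff] at h3
    norm_num [ta, tb] at h3
  · rintro ⟨χ, hbf, -, h⟩
    have he := h (Fin 3) ⟨0⟩ Rc (fun w => Set.toFinite _) vc 0
    have h2 : bval Rc vc (.box (.var 0)) 0 = ta := by
      rw [box0]; simp [bval, vc, inf_eq_left.mpr lab]
    have h3 := (key2 χ hbf).2
    rw [he, h2] at h3
    simp only [Subtype.ext_iff] at h3
    norm_num [ta, tb] at h3
end

section
/- Let Δ^¬φ := ∼(𝟏 ⧀ φ) ∧ ¬∼∼(𝟏 ⧀ φ). The formula Δ^¬(p→q) ∨ Δ^¬(q→p) is not KG²-valid: in any KG² model with v₁(p,w)=0.7, v₂(p,w)=0.6, v₁(q,w)=0.4, v₂(q,w)=0.2 one has (v₁(Δ^¬(p→q) ∨ Δ^¬(q→p), w), v₂(Δ^¬(p→q) ∨ Δ^¬(q→p), w)) = (0,1) ≠ (1,0). -/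
/-- `𝟏 := p → p`. -/
def fone : Formula := .imp (.var 0) (.var 0)

/-- `𝟎 := p ⧀ p`. -/
def fzero : Formula := .coimp (.var 0) (.var 0)

/-- Gödel negation `∼φ := φ → 𝟎`. -/
def fnegG (φ : Formula) : Formula := .imp φ fzero

/-- `Δ^¬φ := ∼(𝟏 ⧀ φ) ∧ ¬∼∼(𝟏 ⧀ φ)`. -/
def fDeltaNeg (φ : Formula) : Formula :=
  .and (fnegG (.coimp fone φ)) (.neg (fnegG (fnegG (.coimp fone φ))))

lemma compute {W : Type} (R : W → W → Prop) (v : ℕ → W → TV × TV) (w : W)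
    (h1 : ((v 0 w).1 : ℝ) = 0.7) (h2 : ((v 0 w).2 : ℝ) = 0.6)
    (h3 : ((v 1 w).1 : ℝ) = 0.4) (h4 : ((v 1 w).2 : ℝ) = 0.2) :
    (kval R v (.or (fDeltaNeg (.imp (.var 0) (.var 1)))
        (fDeltaNeg (.imp (.var 1) (.var 0)))) w).1 = 0 ∧
    (kval R v (.or (fDeltaNeg (.imp (.var 0) (.var 1)))
        (fDeltaNeg (.imp (.var 1) (.var 0)))) w).2 = 1 := by
  have e1 : (v 0 w).1 = (⟨0.7, by norm_num⟩ : TV) := Subtype.ext h1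
  have e2 : (v 0 w).2 = (⟨0.6, by norm_num⟩ : TV) := Subtype.ext h2
  have e3 : (v 1 w).1 = (⟨0.4, by norm_num⟩ : TV) := Subtype.ext h3
  have e4 : (v 1 w).2 = (⟨0.2, by norm_num⟩ : TV) := Subtype.ext h4
  simp only [kval, fDeltaNeg, fnegG, fone, fzero, e1, e2, e3, e4]
  norm_num [gimp, gcoimp, ← Subtype.coe_le_coe, Subtype.ext_iff]

/-- `Δ^¬(p→q) ∨ Δ^¬(q→p)` is not KG²-valid: whenever `v(p,w) = (0.7,0.6)` and
`v(q,w) = (0.4,0.2)`, its value is `(0,1) ≠ (1,0)`. -/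
theorem stmt13 :
    (∀ (W : Type), Nonempty W → ∀ (R : W → W → Prop) (v : ℕ → W → TV × TV) (w : W),
      (((v 0 w).1 : ℝ) = 0.7 ∧ ((v 0 w).2 : ℝ) = 0.6 ∧
       ((v 1 w).1 : ℝ) = 0.4 ∧ ((v 1 w).2 : ℝ) = 0.2) →
      (kval R v (.or (fDeltaNeg (.imp (.var 0) (.var 1)))
          (fDeltaNeg (.imp (.var 1) (.var 0)))) w).1 = 0 ∧
      (kval R v (.or (fDeltaNeg (.imp (.var 0) (.var 1)))
          (fDeltaNeg (.imp (.var 1) (.var 0)))) w).2 = 1) ∧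
    ¬ (∀ (W : Type), Nonempty W → ∀ (R : W → W → Prop) (v : ℕ → W → TV × TV) (w : W),
        (kval R v (.or (fDeltaNeg (.imp (.var 0) (.var 1)))
            (fDeltaNeg (.imp (.var 1) (.var 0)))) w).1 = 1 ∧
        (kval R v (.or (fDeltaNeg (.imp (.var 0) (.var 1)))
            (fDeltaNeg (.imp (.var 1) (.var 0)))) w).2 = 0) := by
  constructor
  · intro W _ R v w ⟨h1, h2, h3, h4⟩
    exact compute R v w h1 h2 h3 h4
  · intro H
    set v : ℕ → Unit → TV × TV := fun n _ =>
      if n = 0 then ((⟨0.7, by norm_num⟩ : TV), (⟨0.6, by norm_num⟩ : TV))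
      else ((⟨0.4, by norm_num⟩ : TV), (⟨0.2, by norm_num⟩ : TV)) with hv
    have hC := compute (W := Unit) (fun _ _ => False) v () (by simp [hv]) (by simp [hv])
      (by simp [hv]) (by simp [hv])
    have hH := H Unit ⟨()⟩ (fun _ _ => False) v ()
    rw [hC.1] at hH
    exact zero_ne_one hH.1
end

section
/- Let Δ^¬φ := ∼(𝟏 ⧀ φ) ∧ ¬∼∼(𝟏 ⧀ φ). Then in every KG² model and every world w, for every formula φ of biL¬_{□,◇}: (v₁(Δ^¬φ,w), v₂(Δ^¬φ,w)) = (1,0) if (v₁(φ,w), v₂(φ,w)) = (1,0), and (v₁(Δ^¬φ,w), v₂(Δ^¬φ,w)) = (0,1) otherwise. -/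
/-- in every KG² model, `Δ^¬φ` has value `(1,0)` if `φ` has value `(1,0)`,
and value `(0,1)` otherwise. -/
theorem stmt15 {W : Type} [Nonempty W] (R : W → W → Prop) (v : ℕ → W → TV × TV)
    (φ : Formula) (w : W) :
    (kval R v φ w = (1, 0) → kval R v (fDeltaNeg φ) w = (1, 0)) ∧
    (kval R v φ w ≠ (1, 0) → kval R v (fDeltaNeg φ) w = (0, 1)) := by
  have h10 : ¬ ((1:TV) ≤ 0) := by norm_num
  have h01 : ((0:TV) ≤ 1) := zero_le_one
  by_cases h1 : (kval R v φ w).1 = 1 <;> by_cases h2 : (kval R v φ w).2 = 0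
  · refine ⟨fun _ => ?_, fun h => absurd (Prod.ext h1 h2) h⟩
    simp [fDeltaNeg, fnegG, fone, fzero, kval, gimp, gcoimp, h1, h2, Prod.ext_iff, h10, h01]
  · have n2 : ¬ ((kval R v φ w).2 ≤ 0) := fun h => h2 (le_antisymm h bot_le)
    refine ⟨fun h => absurd (congrArg Prod.snd h) h2, fun _ => ?_⟩
    simp [fDeltaNeg, fnegG, fone, fzero, kval, gimp, gcoimp, h1, n2, Prod.ext_iff, h10, h01]
  · have n1 : ¬ ((1:TV) ≤ (kval R v φ w).1) := fun h => h1 (le_antisymm le_top h)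
    refine ⟨fun h => absurd (congrArg Prod.fst h) h1, fun _ => ?_⟩
    simp [fDeltaNeg, fnegG, fone, fzero, kval, gimp, gcoimp, n1, h2, Prod.ext_iff, h10, h01]
  · have n1 : ¬ ((1:TV) ≤ (kval R v φ w).1) := fun h => h1 (le_antisymm le_top h)
    have n2 : ¬ ((kval R v φ w).2 ≤ 0) := fun h => h2 (le_antisymm h bot_le)
    refine ⟨fun h => absurd (congrArg Prod.fst h) h1, fun _ => ?_⟩
    simp [fDeltaNeg, fnegG, fone, fzero, kval, gimp, gcoimp, n1, n2, Prod.ext_iff, h10, h01]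
end

section
/- Faithful embedding of the classical modal logic K into KbiG on crisp frames: for a classical modal formula φ (built from variables using 𝟎, ∧, ∨, →, □, ◇), let φ^∼ be the biL_{□,◇} formula obtained from φ by replacing every occurrence of each propositional variable p by ∼∼p. Then for every crisp frame F: F ⊨_K φ (φ is true under the standard two-valued Kripke semantics at every world of every classical model on F) if and only if F ⊨_{KbiG} φ^∼. -/
/-- Classical modal formulas: built from variables and `𝟎` using `∧, ∨, →, □, ◇`. -/
inductive CForm : Type
  | fls : CForm
  | var : ℕ → CForm
  | and : CForm → CForm → CForm
  | or : CForm → CForm → CForm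
  | imp : CForm → CForm → CForm
  | box : CForm → CForm
  | dia : CForm → CForm

/-- Standard two-valued Kripke semantics on a crisp frame `(W, R)`. -/
def cval {W : Type} (R : W → W → Prop) (v : ℕ → W → Prop) : CForm → W → Prop
  | .fls, _ => False
  | .var p, w => v p w
  | .and φ ψ, w => cval R v φ w ∧ cval R v ψ w
  | .or φ ψ, w => cval R v φ w ∨ cval R v ψ w
  | .imp φ ψ, w => cval R v φ w → cval R v ψ w
  | .box φ, w => ∀ w', R w w' → cval R v φ w'
  | .dia φ, w => ∃ w', R w w' ∧ cval R v φ w'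

/-- The translation `φ ↦ φ^∼` replacing every variable `p` by `∼∼p`. -/
def CForm.trans : CForm → FormulaB
  | .fls => bzero
  | .var p => bnegG (bnegG (.var p))
  | .and φ ψ => .and φ.trans ψ.trans
  | .or φ ψ => .or φ.trans ψ.trans
  | .imp φ ψ => .imp φ.trans ψ.trans
  | .box φ => .box φ.trans
  | .dia φ => .dia φ.trans

lemma TV_zero_ne_one : (0:TV) ≠ 1 := by norm_num [Subtype.ext_iff]

lemma TV_one_nle_zero : ¬((1:TV) ≤ 0) := fun h => TV_zero_ne_one (le_bot_iff.mp h).symm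

lemma TV_zero_le (x : TV) : (0:TV) ≤ x := bot_le

lemma cval_congr {W : Type} (R : W → W → Prop) {v v' : ℕ → W → Prop}
    (h : ∀ p w, v p w ↔ v' p w) (φ : CForm) (w : W) :
    cval R v φ w ↔ cval R v' φ w := by
  induction φ generalizing w with
  | fls => rfl
  | var p => exact h p w
  | and φ ψ ih1 ih2 => exact and_congr (ih1 w) (ih2 w)
  | or φ ψ ih1 ih2 => exact or_congr (ih1 w) (ih2 w)
  | imp φ ψ ih1 ih2 => exact imp_congr (ih1 w) (ih2 w)
  | box φ ih => exact forall₂_congr fun w' _ => ih w'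
  | dia φ ih => exact exists_congr fun w' => and_congr_right fun _ => ih w'

open Classical in
lemma key {W : Type} (R : W → W → Prop) (v : ℕ → W → TV) (φ : CForm) (w : W) :
    bval R v φ.trans w =
      if cval R (fun p w => v p w ≠ 0) φ w then 1 else 0 := by
  classical
  induction φ generalizing w with
  | fls => simp [CForm.trans, bval_bzero, cval]
  | var p =>
    simp only [CForm.trans]
    rw [bval_bnegG, bval_bnegG]
    show (if (if v p w = 0 then (1:TV) else 0) = 0 then (1:TV) else 0) = _
    by_cases h : v p w = 0 <;>
      simp [h, cval, TV_zero_ne_one, TV_zero_ne_one.symm]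
  | and φ ψ ih1 ih2 =>
    simp only [CForm.trans, bval, ih1, ih2, cval]
    by_cases h1 : cval R (fun p w => v p w ≠ 0) φ w <;>
      by_cases h2 : cval R (fun p w => v p w ≠ 0) ψ w <;>
      simp [h1, h2]
  | or φ ψ ih1 ih2 =>
    simp only [CForm.trans, bval, ih1, ih2, cval]
    by_cases h1 : cval R (fun p w => v p w ≠ 0) φ w <;>
      by_cases h2 : cval R (fun p w => v p w ≠ 0) ψ w <;>
      simp [h1, h2]
  | imp φ ψ ih1 ih2 =>
    simp only [CForm.trans, bval, ih1, ih2, cval, gimp]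
    by_cases h1 : cval R (fun p w => v p w ≠ 0) φ w <;>
      by_cases h2 : cval R (fun p w => v p w ≠ 0) ψ w <;>
      simp [h1, h2, TV_zero_ne_one, TV_one_nle_zero, TV_zero_le, le_refl]
  | box φ ih =>
    simp only [CForm.trans, bval, cval]
    by_cases h : ∀ w', R w w' → cval R (fun p w => v p w ≠ 0) φ w'
    · simp only [eq_true h, ↓reduceIte]
      refine le_antisymm le_top (le_sInf ?_)
      rintro x ⟨w', hw', rfl⟩
      show (1:TV) ≤ bval R v φ.trans w'
      rw [ih w', if_pos (h w' hw')]
    · simp only [h, ↓reduceIte]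
      push_neg at h
      obtain ⟨w', hw', hc⟩ := h
      refine le_antisymm ?_ bot_le
      refine sInf_le_of_le ⟨w', hw', rfl⟩ ?_
      show bval R v φ.trans w' ≤ 0
      rw [ih w', if_neg hc]
  | dia φ ih =>
    simp only [CForm.trans, bval, cval]
    by_cases h : ∃ w', R w w' ∧ cval R (fun p w => v p w ≠ 0) φ w'
    · simp only [h, ↓reduceIte]
      obtain ⟨w', hw', hc⟩ := h
      refine le_antisymm le_top (le_sSup_of_le ⟨w', hw', rfl⟩ ?_)
      show (1:TV) ≤ bval R v φ.trans w'
      rw [ih w', if_pos hc]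
    · simp only [h, ↓reduceIte]
      push_neg at h
      refine le_antisymm (sSup_le ?_) bot_le
      rintro x ⟨w', hw', rfl⟩
      show bval R v φ.trans w' ≤ 0
      rw [ih w', if_neg (h w' hw')]

/-- faithful embedding of classical `K` into KbiG over crisp frames:
`F ⊨_K φ` iff `F ⊨_{KbiG} φ^∼`, where `φ^∼` replaces each variable `p` by `∼∼p`. -/
theorem stmt18 {W : Type} [Nonempty W] (R : W → W → Prop) (φ : CForm) :
    (∀ (v : ℕ → W → Prop) (w : W), cval R v φ w) ↔
    (∀ (v : ℕ → W → TV) (w : W), bval R v φ.trans w = 1) := by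
  classical
  constructor
  · intro h v w
    rw [key, if_pos (h _ w)]
  · intro h v w
    have hb := h (fun p w => if v p w then 1 else 0) w
    rw [key] at hb
    by_contra hc
    rw [if_neg] at hb
    · exact TV_zero_ne_one hb
    · intro hcv
      exact hc ((cval_congr R (fun p w => by by_cases hv : v p w <;>
        simp [hv, TV_zero_ne_one.symm]) φ w).mp hcv)
end
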